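/- Let m ∈ [-1, 0], β > 0, and h ≥ D₀ > 0 with 0 ≤ D(q) ≤ D₀. Under the self-consistency equation (1/N) Σ_q (-m)/(e^{2β(h - m D(q))} - 1) = (1+m)/2, one has m ≤ -1 + 2/(e^{2βD₀} - 1). -/
import Mathlib


open Finset in
/-- Self-consistency bound on the magnetization with `h ≥ D₀ > 0`:
`m ≤ -1 + 2/(e^{2βD₀} - 1)`. -/
theorem stmt_6 {Q : Type*} [Fintype Q] [Nonempty Q] (m β h D₀ : ℝ) (D : Q → ℝ)
    (hm1 : -1 ≤ m) (hm2 : m ≤ 0) (hβ : 0 < β) (hD0pos : 0 < D₀) (hhD0 : D₀ ≤ h)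
    (hD0 : ∀ q, 0 ≤ D q) (hD1 : ∀ q, D q ≤ D₀)
    (hself : (1 / (Fintype.card Q : ℝ)) *
      ∑ q : Q, (-m) / (Real.exp (2 * β * (h - m * D q)) - 1) = (1 + m) / 2) :
    m ≤ -1 + 2 / (Real.exp (2 * β * D₀) - 1) := by
  set E := Real.exp (2 * β * D₀) with hE
  have hE1 : 1 < E := by
    rw [hE]
    have : (0:ℝ) < 2 * β * D₀ := by positivity
    calc (1:ℝ) = Real.exp 0 := by simp
    _ < Real.exp (2 * β * D₀) := Real.exp_lt_exp.mpr this
  have hEpos : 0 < E - 1 := by linarith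
  have hterm : ∀ q : Q, (-m) / (Real.exp (2 * β * (h - m * D q)) - 1) ≤ 1 / (E - 1) := by
    intro q
    have hmd : 0 ≤ -(m * D q) := by
      have := hD0 q
      nlinarith
    have harg : 2 * β * D₀ ≤ 2 * β * (h - m * D q) := by nlinarith
    have hexp : E ≤ Real.exp (2 * β * (h - m * D q)) := by
      rw [hE]; exact Real.exp_le_exp.mpr harg
    apply div_le_div₀ (by norm_num) (by linarith) hEpos (by linarith)
  have hN : (0:ℝ) < (Fintype.card Q : ℝ) := by
    exact_mod_cast Fintype.card_pos
  have hsum : ∑ q : Q, (-m) / (Real.exp (2 * β * (h - m * D q)) - 1)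
      ≤ (Fintype.card Q : ℝ) * (1 / (E - 1)) := by
    calc ∑ q : Q, (-m) / (Real.exp (2 * β * (h - m * D q)) - 1)
        ≤ ∑ _q : Q, 1 / (E - 1) := Finset.sum_le_sum fun q _ => hterm q
      _ = (Fintype.card Q : ℝ) * (1 / (E - 1)) := by
          simp [Finset.sum_const, mul_comm]
  have hkey : (1 + m) / 2 ≤ 1 / (E - 1) := by
    rw [← hself]
    have := mul_le_mul_of_nonneg_left hsum (le_of_lt (one_div_pos.mpr hN))
    calc 1 / (Fintype.card Q : ℝ) * ∑ q : Q, (-m) / (Real.exp (2 * β * (h - m * D q)) - 1)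
        ≤ 1 / (Fintype.card Q : ℝ) * ((Fintype.card Q : ℝ) * (1 / (E - 1))) := this
      _ = 1 / (E - 1) := by field_simp
  have h2 : 2 / (E - 1) = 2 * (1 / (E - 1)) := by ring
  linarith
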